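/- Let 𝒜 : 𝒳 → 𝒴 be a surjective linear map between finite-dimensional inner product spaces and let σ > 0. If z ∈ 𝒴 satisfies ‖(𝒜𝒜* + σ·id)z + g‖ ≤ η‖g‖ for some g ∈ 𝒴 and η ≥ 0, then the vector x = 𝒜* z satisfies ‖x‖ ≤ (1 + η) · ‖𝒜†‖ · ‖g‖, where ‖𝒜†‖ is the operator norm of the pseudoinverse. -/

import Mathlib

set_option maxHeartbeats 1000000

/-- If 𝒜 is surjective, σ > 0 and z satisfies the inexact regularized normal
equation residual bound ‖(𝒜𝒜* + σ id)z + g‖ ≤ η‖g‖, then x = 𝒜* z satisfies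
‖x‖ ≤ (1+η)·‖𝒜†‖·‖g‖, where 𝒜† = 𝒜*(𝒜𝒜*)⁻¹ is the pseudoinverse. -/
theorem norm_adjoint_step_le
    {X Y : Type*} [NormedAddCommGroup X] [InnerProductSpace ℝ X]
    [FiniteDimensional ℝ X] [NormedAddCommGroup Y] [InnerProductSpace ℝ Y]
    [FiniteDimensional ℝ Y]
    (A : X →L[ℝ] Y) (hA : Function.Surjective A)
    (C : Y →L[ℝ] Y)
    (hC : (A.comp (ContinuousLinearMap.adjoint A)).comp C =
      ContinuousLinearMap.id ℝ Y)
    (hC' : C.comp (A.comp (ContinuousLinearMap.adjoint A)) =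
      ContinuousLinearMap.id ℝ Y)
    (σ η : ℝ) (hσ : 0 < σ) (hη : 0 ≤ η) (g z : Y)
    (hres : ‖(A.comp (ContinuousLinearMap.adjoint A)
        + σ • ContinuousLinearMap.id ℝ Y) z + g‖ ≤ η * ‖g‖) :
    ‖(ContinuousLinearMap.adjoint A) z‖ ≤
      (1 + η) * ‖(ContinuousLinearMap.adjoint A).comp C‖ * ‖g‖ := by
  set T := ContinuousLinearMap.adjoint A with hT
  set M := A.comp T with hM
  -- M is self-adjoint
  have hMsa : ContinuousLinearMap.adjoint M = M := by
    rw [hM, ContinuousLinearMap.adjoint_comp, ContinuousLinearMap.adjoint_adjoint, hT]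
  -- C is self-adjoint
  have hCM : (ContinuousLinearMap.adjoint C).comp M = ContinuousLinearMap.id ℝ Y := by
    have := congrArg ContinuousLinearMap.adjoint hC
    rwa [ContinuousLinearMap.adjoint_comp, hMsa, ContinuousLinearMap.adjoint_id] at this
  have hCsa : ContinuousLinearMap.adjoint C = C := by
    calc ContinuousLinearMap.adjoint C
        = ((ContinuousLinearMap.adjoint C).comp M).comp C := by
          rw [ContinuousLinearMap.comp_assoc, hC]; rfl
      _ = C := by rw [hCM]; rfl
  set w := (M + σ • ContinuousLinearMap.id ℝ Y) z with hw
  have hwz : w = M z + σ • z := by simp [hw]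
  -- inner ℝ z (M z) = ‖T z‖²
  have h1 : inner ℝ z (M z) = ‖T z‖^2 := by
    rw [hM]
    simp only [ContinuousLinearMap.comp_apply]
    rw [hT, ← ContinuousLinearMap.adjoint_inner_left]
    rw [real_inner_self_eq_norm_sq]
  have h2 : ‖T z‖^2 ≤ inner ℝ z w := by
    rw [hwz, inner_add_right, h1, real_inner_smul_right, real_inner_self_eq_norm_sq]
    nlinarith [sq_nonneg ‖z‖]
  -- inner ℝ z w = inner ℝ (T z) (T (C w))
  have h3 : (inner ℝ z w : ℝ) = inner ℝ (T z) (T (C w)) := by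
    have hz : z = C (M z) := by
      have := congrArg (fun f => f z) hC'
      simpa using this.symm
    calc (inner ℝ z w : ℝ) = inner ℝ (C (M z)) w := by rw [← hz]
      _ = inner ℝ (M z) (C w) := by
          rw [← hCsa, ContinuousLinearMap.adjoint_inner_left, hCsa]
      _ = inner ℝ (T z) (T (C w)) := by
          rw [hM]; simp only [ContinuousLinearMap.comp_apply]
          rw [hT, ContinuousLinearMap.adjoint_inner_right]
  have h4 : (inner ℝ (T z) (T (C w)) : ℝ) ≤ ‖T z‖ * (‖T.comp C‖ * ‖w‖) := by
    calc (inner ℝ (T z) (T (C w)) : ℝ) ≤ ‖T z‖ * ‖T (C w)‖ := real_inner_le_norm _ _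
      _ ≤ ‖T z‖ * (‖T.comp C‖ * ‖w‖) := by
          apply mul_le_mul_of_nonneg_left _ (norm_nonneg _)
          exact (T.comp C).le_opNorm w
  have hwg : ‖w‖ ≤ (1 + η) * ‖g‖ := by
    have : ‖w‖ ≤ ‖w + g‖ + ‖g‖ := by
      have := norm_add_le (w + g) (-g); simpa using this
    nlinarith
  have hkey : ‖T z‖^2 ≤ ‖T z‖ * (‖T.comp C‖ * ((1 + η) * ‖g‖)) := by
    have := h2.trans (h3.le.trans h4)
    have h5 : ‖T z‖ * (‖T.comp C‖ * ‖w‖) ≤ ‖T z‖ * (‖T.comp C‖ * ((1 + η) * ‖g‖)) := by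
      apply mul_le_mul_of_nonneg_left _ (norm_nonneg _)
      exact mul_le_mul_of_nonneg_left hwg (norm_nonneg _)
    linarith
  nlinarith [norm_nonneg (T z), norm_nonneg (T.comp C), norm_nonneg g,
    mul_nonneg (mul_nonneg (by linarith : (0:ℝ) ≤ 1 + η) (norm_nonneg (T.comp C))) (norm_nonneg g)]
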